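/- Let Ω ⊆ ℝᵈ be a bounded Lipschitz domain, 0 < ε ≤ 1, and ŵ ∈ H^{1/2}(Γ). The system div λ + ε^{−1/2} w = 0, λ + ∇w = 0 in Ω with w|_Γ = ŵ admits a unique solution (w, λ) ∈ H¹(Ω) × H(div, Ω), and ‖λ‖² + ε^{1/2}‖div λ‖² = ‖∇w‖² + ε^{−1/2}‖w‖² ≤ ε^{−1} ‖ŵ‖²_{H^{1/2}(Γ)}, where ‖ŵ‖²_{H^{1/2}(Γ)} := inf{‖u‖² + ε‖∇u‖² : u ∈ H¹(Ω), u|_Γ = ŵ}. -/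

import Mathlib

open scoped InnerProductSpace

set_option maxHeartbeats 1000000

/-- Lemma 4.7 (robust stability of the singularly perturbed adjoint problem):
in an abstract model of the Sobolev setting on a bounded Lipschitz domain
`Ω ⊆ ℝᵈ` with `0 < ε ≤ 1`, the system `div λ + ε^{-1/2} w = 0`,
`λ + ∇w = 0` in `Ω`, `w|_Γ = ŵ` has a unique solution
`(w, λ) ∈ H¹(Ω) × H(div,Ω)`, and
`‖λ‖² + ε^{1/2}‖div λ‖² = ‖∇w‖² + ε^{-1/2}‖w‖² ≤ ε^{-1}‖ŵ‖²_{H^{1/2}(Γ)}`,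
where `‖ŵ‖²_{H^{1/2}(Γ)} = inf{‖u‖² + ε‖∇u‖² : u|_Γ = ŵ}`. -/
theorem sp_adjoint_problem_stability
    {H1 HD L2 L2d Htr : Type*}
    [NormedAddCommGroup H1] [InnerProductSpace ℝ H1] [CompleteSpace H1]
    [AddCommGroup HD] [Module ℝ HD]
    [NormedAddCommGroup L2] [InnerProductSpace ℝ L2]
    [NormedAddCommGroup L2d] [InnerProductSpace ℝ L2d]
    [NormedAddCommGroup Htr] [NormedSpace ℝ Htr]
    (ε : ℝ) (hε : 0 < ε) (hε1 : ε ≤ 1)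
    (ι : H1 →L[ℝ] L2) (grad : H1 →L[ℝ] L2d) (tr : H1 →L[ℝ] Htr)
    (toL2d : HD →ₗ[ℝ] L2d) (dvg : HD →ₗ[ℝ] L2)
    (hι : Function.Injective ι) (hHDinj : Function.Injective toL2d)
    (hnorm : ∀ w : H1, ‖w‖ ^ 2 = ‖ι w‖ ^ 2 + ‖grad w‖ ^ 2)
    (hGreen : ∀ (q : HD) (w : H1), tr w = 0 →
        ⟪toL2d q, grad w⟫_ℝ + ⟪dvg q, ι w⟫_ℝ = 0)
    (hHD : ∀ (σ : L2d) (g : L2),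
        (∀ w : H1, tr w = 0 → ⟪σ, grad w⟫_ℝ + ⟪g, ι w⟫_ℝ = 0) →
        ∃ q : HD, toL2d q = σ ∧ dvg q = g)
    (what : Htr) (hext : ∃ u0 : H1, tr u0 = what) :
    (∃! p : H1 × HD,
        dvg p.2 + (ε ^ (-(1:ℝ)/2)) • ι p.1 = 0 ∧
        toL2d p.2 + grad p.1 = 0 ∧ tr p.1 = what) ∧
    (∀ p : H1 × HD,
        dvg p.2 + (ε ^ (-(1:ℝ)/2)) • ι p.1 = 0 →
        toL2d p.2 + grad p.1 = 0 → tr p.1 = what →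
        ‖toL2d p.2‖ ^ 2 + ε ^ ((1:ℝ)/2) * ‖dvg p.2‖ ^ 2
            = ‖grad p.1‖ ^ 2 + ε ^ (-(1:ℝ)/2) * ‖ι p.1‖ ^ 2 ∧
        ‖grad p.1‖ ^ 2 + ε ^ (-(1:ℝ)/2) * ‖ι p.1‖ ^ 2
            ≤ ε⁻¹ * sInf {r : ℝ | ∃ u : H1, tr u = what ∧
                r = ‖ι u‖ ^ 2 + ε * ‖grad u‖ ^ 2}) := by
  set c : ℝ := ε ^ (-(1:ℝ)/2) with hcdef
  have hcpos : 0 < c := Real.rpow_pos_of_pos hε _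
  have hc1 : 1 ≤ c := by
    have h := Real.rpow_le_rpow_of_exponent_ge hε hε1 (by norm_num : (-(1:ℝ)/2) ≤ 0)
    rwa [Real.rpow_zero] at h
  have hhalf : ε ^ ((1:ℝ)/2) * c = 1 := by
    rw [hcdef, ← Real.rpow_add hε]
    norm_num
  have hcle : c ≤ ε⁻¹ := by
    have h := Real.rpow_le_rpow_of_exponent_ge hε hε1 (by norm_num : (-1:ℝ) ≤ -(1:ℝ)/2)
    rwa [Real.rpow_neg_one] at h
  have hεc : ε * c ≤ 1 := by
    have h := mul_le_mul_of_nonneg_left hcle hε.le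
    rwa [mul_inv_cancel₀ hε.ne'] at h
  obtain ⟨u0, hu0⟩ := hext
  -- components are bounded by the norm
  have hgle : ∀ u : H1, ‖grad u‖ ≤ ‖u‖ := by
    intro u
    nlinarith [hnorm u, norm_nonneg u, norm_nonneg (grad u), sq_nonneg ‖ι u‖]
  have hile : ∀ u : H1, ‖ι u‖ ≤ ‖u‖ := by
    intro u
    nlinarith [hnorm u, norm_nonneg u, norm_nonneg (ι u), sq_nonneg ‖grad u‖]
  -- the bilinear form
  let bl : H1 →ₗ[ℝ] H1 →ₗ[ℝ] ℝ :=
    LinearMap.mk₂ ℝ (fun u v => ⟪grad u, grad v⟫_ℝ + c * ⟪ι u, ι v⟫_ℝ)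
      (fun u u' v => by simp only [map_add, inner_add_left]; ring)
      (fun a u v => by simp only [map_smul, real_inner_smul_left, smul_eq_mul]; ring)
      (fun u v v' => by simp only [map_add, inner_add_right]; ring)
      (fun a u v => by simp only [map_smul, real_inner_smul_right, smul_eq_mul]; ring)
  let B : H1 →L[ℝ] H1 →L[ℝ] ℝ := LinearMap.mkContinuous₂ bl (1 + c) (by
    intro u v
    have h1 := abs_real_inner_le_norm (grad u) (grad v)
    have h2 := abs_real_inner_le_norm (ι u) (ι v)
    have h3 := hgle u; have h4 := hgle v
    have h5 := hile u; have h6 := hile v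
    have hb : ‖bl u v‖ = |⟪grad u, grad v⟫_ℝ + c * ⟪ι u, ι v⟫_ℝ| := rfl
    rw [hb]
    have h7 : |⟪grad u, grad v⟫_ℝ + c * ⟪ι u, ι v⟫_ℝ|
        ≤ |⟪grad u, grad v⟫_ℝ| + c * |⟪ι u, ι v⟫_ℝ| := by
      calc |⟪grad u, grad v⟫_ℝ + c * ⟪ι u, ι v⟫_ℝ|
          ≤ |⟪grad u, grad v⟫_ℝ| + |c * ⟪ι u, ι v⟫_ℝ| := abs_add_le _ _
        _ = |⟪grad u, grad v⟫_ℝ| + c * |⟪ι u, ι v⟫_ℝ| := by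
            rw [abs_mul, abs_of_pos hcpos]
    have h8 : ‖grad u‖ * ‖grad v‖ ≤ ‖u‖ * ‖v‖ :=
      mul_le_mul h3 h4 (norm_nonneg _) (norm_nonneg _)
    have h9 : ‖ι u‖ * ‖ι v‖ ≤ ‖u‖ * ‖v‖ :=
      mul_le_mul h5 h6 (norm_nonneg _) (norm_nonneg _)
    have h10 : |⟪ι u, ι v⟫_ℝ| ≤ ‖u‖ * ‖v‖ := h2.trans h9
    have h11 : |⟪grad u, grad v⟫_ℝ| ≤ ‖u‖ * ‖v‖ := h1.trans h8
    nlinarith [mul_le_mul_of_nonneg_left h10 hcpos.le]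
    )
  have hB : ∀ u v : H1, B u v = ⟪grad u, grad v⟫_ℝ + c * ⟪ι u, ι v⟫_ℝ :=
    fun u v => rfl
  -- the kernel of the trace
  let K : Submodule ℝ H1 := LinearMap.ker (tr : H1 →ₗ[ℝ] Htr)
  let B' : K →L[ℝ] K →L[ℝ] ℝ := ((B.comp K.subtypeL).flip.comp K.subtypeL).flip
  have hB'B : ∀ u v : K, B' u v = B (u : H1) (v : H1) := by
    intro u v
    simp [B']
  have coercive : IsCoercive B' := by
    refine ⟨1, one_pos, fun u => ?_⟩
    have h1 := hnorm (u : H1)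
    have h2 : B' u u = ‖grad (u : H1)‖ ^ 2 + c * ‖ι (u : H1)‖ ^ 2 := by
      rw [hB'B, hB, real_inner_self_eq_norm_sq, real_inner_self_eq_norm_sq]
    have hn : ‖u‖ = ‖(u : H1)‖ := rfl
    rw [h2, one_mul, hn]
    nlinarith [sq_nonneg ‖ι (u : H1)‖, norm_nonneg (u : H1)]
  -- Lax–Milgram on K
  let f : K →L[ℝ] ℝ := -((B u0).comp K.subtypeL)
  let w : K := coercive.continuousLinearEquivOfBilin.symm
    ((InnerProductSpace.toDual ℝ K).symm f)
  have hw : ∀ v : K, B' w v = f v := by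
    intro v
    have h := coercive.continuousLinearEquivOfBilin_apply w v
    rw [ContinuousLinearEquiv.apply_symm_apply] at h
    rw [← h]
    exact InnerProductSpace.toDual_symm_apply
  set u₁ : H1 := u0 + (w : H1) with hu₁def
  have htru₁ : tr u₁ = what := by
    have hwK : tr (w : H1) = 0 := w.2
    rw [hu₁def, map_add, hu0, hwK, add_zero]
  have horth : ∀ v : H1, tr v = 0 → ⟪grad u₁, grad v⟫_ℝ + c * ⟪ι u₁, ι v⟫_ℝ = 0 := by
    intro v hv
    have hvK : v ∈ K := hv
    have h := hw ⟨v, hvK⟩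
    rw [hB'B] at h
    have hf : f (⟨v, hvK⟩ : K) = -(B u0 v) := by simp [f]
    rw [hf] at h
    rw [← hB]
    rw [hu₁def, map_add, ContinuousLinearMap.add_apply, h]
    ring
  obtain ⟨q, hq1, hq2⟩ := hHD (-(grad u₁)) (-(c • ι u₁)) (by
    intro v hv
    have h := horth v hv
    rw [inner_neg_left, inner_neg_left, real_inner_smul_left]
    linarith)
  -- the solution property
  have hsol1 : dvg q + c • ι u₁ = 0 := by rw [hq2]; exact neg_add_cancel _
  have hsol2 : toL2d q + grad u₁ = 0 := by rw [hq1]; exact neg_add_cancel _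
  -- uniqueness
  have huniq : ∀ p : H1 × HD,
      dvg p.2 + c • ι p.1 = 0 → toL2d p.2 + grad p.1 = 0 → tr p.1 = what →
      p = (u₁, q) := by
    intro p hp1 hp2 hp3
    have htd : tr (p.1 - u₁) = 0 := by rw [map_sub, hp3, htru₁, sub_self]
    have he1 : toL2d (p.2 - q) = -(grad (p.1 - u₁)) := by
      have h1 : toL2d p.2 = -(grad p.1) := eq_neg_of_add_eq_zero_left hp2
      rw [map_sub, map_sub, h1, hq1]
      abel
    have he2 : dvg (p.2 - q) = -(c • ι (p.1 - u₁)) := by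
      have h1 : dvg p.2 = -(c • ι p.1) := eq_neg_of_add_eq_zero_left hp1
      rw [map_sub, map_sub, h1, hq2, smul_sub]
      abel
    have hG := hGreen (p.2 - q) (p.1 - u₁) htd
    rw [he1, he2, inner_neg_left, inner_neg_left, real_inner_smul_left,
      real_inner_self_eq_norm_sq, real_inner_self_eq_norm_sq] at hG
    have hgz : ‖grad (p.1 - u₁)‖ ^ 2 = 0 ∧ ‖ι (p.1 - u₁)‖ ^ 2 = 0 := by
      constructor <;> nlinarith [sq_nonneg ‖grad (p.1 - u₁)‖, sq_nonneg ‖ι (p.1 - u₁)‖]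
    have hd0 : p.1 - u₁ = 0 := by
      have hn := hnorm (p.1 - u₁)
      rw [hgz.1, hgz.2, add_zero] at hn
      have : ‖p.1 - u₁‖ = 0 := by nlinarith [norm_nonneg (p.1 - u₁)]
      exact norm_eq_zero.mp this
    have hp1u : p.1 = u₁ := sub_eq_zero.mp hd0
    have he0 : p.2 - q = 0 := by
      apply hHDinj
      rw [he1, hd0, map_zero, map_zero, neg_zero]
    have hp2q : p.2 = q := sub_eq_zero.mp he0
    exact Prod.ext hp1u hp2q
  constructor
  · exact ⟨(u₁, q), ⟨hsol1, hsol2, htru₁⟩, fun p hp => huniq p hp.1 hp.2.1 hp.2.2⟩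
  · intro p hp1 hp2 hp3
    have hq1' : toL2d p.2 = -(grad p.1) := eq_neg_of_add_eq_zero_left hp2
    have hq2' : dvg p.2 = -(c • ι p.1) := eq_neg_of_add_eq_zero_left hp1
    have hnt : ‖toL2d p.2‖ = ‖grad p.1‖ := by rw [hq1', norm_neg]
    have hnd : ‖dvg p.2‖ = c * ‖ι p.1‖ := by
      rw [hq2', norm_neg, norm_smul, Real.norm_eq_abs, abs_of_pos hcpos]
    constructor
    · rw [hnt, hnd]
      have : ε ^ ((1:ℝ)/2) * (c * ‖ι p.1‖) ^ 2 = c * ‖ι p.1‖ ^ 2 := by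
        have h : ε ^ ((1:ℝ)/2) * (c * ‖ι p.1‖) ^ 2
            = (ε ^ ((1:ℝ)/2) * c) * (c * ‖ι p.1‖ ^ 2) := by ring
        rw [h, hhalf, one_mul]
      rw [this]
    · -- the estimate
      have key : ∀ u : H1, tr u = what →
          ε * (‖grad p.1‖ ^ 2 + c * ‖ι p.1‖ ^ 2) ≤ ‖ι u‖ ^ 2 + ε * ‖grad u‖ ^ 2 := by
        intro u hu
        have htv : tr (p.1 - u) = 0 := by rw [map_sub, hp3, hu, sub_self]
        have hG := hGreen p.2 (p.1 - u) htv
        rw [hq1', hq2', inner_neg_left, inner_neg_left, real_inner_smul_left] at hG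
        have hgu : grad u = grad p.1 - grad (p.1 - u) := by rw [map_sub]; abel
        have hiu : ι u = ι p.1 - ι (p.1 - u) := by rw [map_sub]; abel
        have hg2 : ‖grad u‖ ^ 2 = ‖grad p.1‖ ^ 2
            - 2 * ⟪grad p.1, grad (p.1 - u)⟫_ℝ + ‖grad (p.1 - u)‖ ^ 2 := by
          rw [hgu, norm_sub_sq_real]
        have hi2 : ‖ι u‖ ^ 2 = ‖ι p.1‖ ^ 2
            - 2 * ⟪ι p.1, ι (p.1 - u)⟫_ℝ + ‖ι (p.1 - u)‖ ^ 2 := by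
          rw [hiu, norm_sub_sq_real]
        have hA : ‖grad p.1‖ ^ 2 + c * ‖ι p.1‖ ^ 2 ≤ ‖grad u‖ ^ 2 + c * ‖ι u‖ ^ 2 := by
          nlinarith [sq_nonneg ‖grad (p.1 - u)‖, sq_nonneg ‖ι (p.1 - u)‖, hcpos.le]
        have hstep : ε * (‖grad u‖ ^ 2 + c * ‖ι u‖ ^ 2) ≤ ‖ι u‖ ^ 2 + ε * ‖grad u‖ ^ 2 := by
          nlinarith [mul_le_mul_of_nonneg_right hεc (sq_nonneg ‖ι u‖)]
        calc ε * (‖grad p.1‖ ^ 2 + c * ‖ι p.1‖ ^ 2)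
            ≤ ε * (‖grad u‖ ^ 2 + c * ‖ι u‖ ^ 2) :=
              mul_le_mul_of_nonneg_left hA hε.le
          _ ≤ ‖ι u‖ ^ 2 + ε * ‖grad u‖ ^ 2 := hstep
      have hSne : {r : ℝ | ∃ u : H1, tr u = what ∧
          r = ‖ι u‖ ^ 2 + ε * ‖grad u‖ ^ 2}.Nonempty := ⟨_, u0, hu0, rfl⟩
      have hlb : ε * (‖grad p.1‖ ^ 2 + c * ‖ι p.1‖ ^ 2)
          ≤ sInf {r : ℝ | ∃ u : H1, tr u = what ∧
              r = ‖ι u‖ ^ 2 + ε * ‖grad u‖ ^ 2} := by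
        refine le_csInf hSne ?_
        rintro r ⟨u, hu, rfl⟩
        exact key u hu
      calc ‖grad p.1‖ ^ 2 + c * ‖ι p.1‖ ^ 2
          = ε⁻¹ * (ε * (‖grad p.1‖ ^ 2 + c * ‖ι p.1‖ ^ 2)) := by
            field_simp
        _ ≤ ε⁻¹ * sInf {r : ℝ | ∃ u : H1, tr u = what ∧
              r = ‖ι u‖ ^ 2 + ε * ‖grad u‖ ^ 2} :=
            mul_le_mul_of_nonneg_left hlb (inv_nonneg.mpr hε.le)
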